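/- Let R be a (unital, associative, not necessarily commutative) ring and let a, b ∈ R satisfy a·b − b·a = b². Then for all natural numbers p and all q ≥ 1, one has b^q·a^p = ∑_{j=0}^{p} (−1)^j·Γ_{p,q}^j · a^{p−j}·b^{q+j}, where Γ_{p,q}^j is the natural number C(q+j−1, j)·p!/(p−j)!. -/

import Mathlib

open Finset

lemma desc_rec (p j : ℕ) :
    (p + 1).descFactorial j = p.descFactorial j + j * p.descFactorial (j - 1) := by
  cases j with
  | zero => simp
  | succ k =>
    rw [Nat.succ_descFactorial_succ, Nat.descFactorial_succ, Nat.succ_sub_one]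
    rcases le_or_gt k p with hk | hk
    · have : p + 1 = (p - k) + (k + 1) := by omega
      rw [this, add_mul]
    · rw [Nat.descFactorial_eq_zero_iff_lt.2 hk]
      simp

lemma choose_desc_rec (s k p : ℕ) :
    (s + k + 1).choose (k + 1) * ((k + 1) * p.descFactorial k)
      = (s + 1 + k) * ((s + k).choose k * p.descFactorial k) := by
  have h1 := Nat.add_one_mul_choose_eq (s + k) k
  calc (s + k + 1).choose (k + 1) * ((k + 1) * p.descFactorial k)
      = ((s + k + 1).choose (k + 1) * (k + 1)) * p.descFactorial k := by ring
    _ = ((s + k).succ * (s + k).choose k) * p.descFactorial k := by rw [h1]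
    _ = (s + 1 + k) * ((s + k).choose k * p.descFactorial k) := by
        simp only [Nat.succ_eq_add_one]; ring

/-- In a ring with `ab - ba = b²`, for `p ≥ 0` and `q ≥ 1`:
`b^q a^p = ∑_{j=0}^{p} (-1)^j Γ_{p,q}^j a^{p-j} b^{q+j}` with
`Γ_{p,q}^j = C(q+j-1, j) · p!/(p-j)!`. -/
theorem stmt_8 {R : Type*} [Ring R] (a b : R) (h : a * b - b * a = b ^ 2)
    (p q : ℕ) (hq : 1 ≤ q) :
    b ^ q * a ^ p = ∑ j ∈ Finset.range (p + 1),
      ((-1) ^ j * (((q + j - 1).choose j) * p.descFactorial j : ℤ)) •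
        (a ^ (p - j) * b ^ (q + j)) := by
  obtain ⟨s, rfl⟩ : ∃ s, q = s + 1 := ⟨q - 1, (Nat.succ_pred_eq_of_pos hq).symm⟩
  have hba : b * a = a * b - b ^ 2 := by rw [← h]; abel
  have key : ∀ m : ℕ, b ^ m * a = a * b ^ m - (m : ℤ) • b ^ (m + 1) := by
    intro m
    induction m with
    | zero => simp
    | succ m ih =>
      calc b ^ (m+1) * a = b ^ m * (b * a) := by rw [pow_succ, mul_assoc]
        _ = b ^ m * (a * b) - b ^ m * b ^ 2 := by rw [hba, mul_sub]
        _ = (b ^ m * a) * b - b ^ (m + 2) := by rw [← mul_assoc, ← pow_add]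
        _ = (a * b ^ m - (m:ℤ) • b ^ (m+1)) * b - b ^ (m+2) := by rw [ih]
        _ = a * b ^ (m+1) - ((m+1:ℕ):ℤ) • b^(m+2) := by
            rw [sub_mul, mul_assoc, ← pow_succ, smul_mul_assoc, ← pow_succ]
            push_cast
            rw [add_smul, one_smul]
            abel
  have hidx : ∀ j : ℕ, s + 1 + j - 1 = s + j := fun j => by omega
  simp only [hidx]
  induction p with
  | zero => simp
  | succ p ih =>
    have hstep : b ^ (s+1) * a ^ (p+1)
        = (∑ j ∈ Finset.range (p+1),
            ((-1:ℤ)^j * (((s+j).choose j) * p.descFactorial j)) • (a^(p+1-j) * b^(s+1+j)))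
          - ∑ j ∈ Finset.range (p+1),
            ((-1:ℤ)^j * (((s+j).choose j) * p.descFactorial j) * (s+1+j)) •
              (a^(p-j) * b^(s+1+j+1)) := by
      rw [pow_succ a p, ← mul_assoc, ih, Finset.sum_mul, ← Finset.sum_sub_distrib]
      refine Finset.sum_congr rfl fun j hj => ?_
      have hj' : j ≤ p := Nat.lt_succ_iff.mp (Finset.mem_range.mp hj)
      rw [smul_mul_assoc, mul_assoc, key (s+1+j), mul_sub, mul_smul_comm,
        smul_sub, smul_smul]
      congr 2
      rw [Nat.succ_sub hj', pow_succ]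
      simp only [mul_assoc]
    rw [hstep]
    have hsplit : ∀ j ∈ Finset.range (p+2),
        ((-1:ℤ)^j * (((s+j).choose j) * (p+1).descFactorial j)) • (a^(p+1-j) * b^(s+1+j))
        = ((-1:ℤ)^j * (((s+j).choose j) * p.descFactorial j)) • (a^(p+1-j) * b^(s+1+j))
          + ((-1:ℤ)^j * (((s+j).choose j) * (j * p.descFactorial (j-1)))) •
              (a^(p+1-j) * b^(s+1+j)) := by
      intro j _
      rw [← add_smul]
      congr 1
      rw [desc_rec]
      push_cast
      ring
    have e1 : (∑ j ∈ Finset.range (p+2),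
          ((-1:ℤ)^j * (((s+j).choose j) * p.descFactorial j)) • (a^(p+1-j) * b^(s+1+j)))
        = ∑ j ∈ Finset.range (p+1),
          ((-1:ℤ)^j * (((s+j).choose j) * p.descFactorial j)) • (a^(p+1-j) * b^(s+1+j)) := by
      rw [Finset.sum_range_succ, Nat.descFactorial_eq_zero_iff_lt.2 (Nat.lt_succ_self p)]
      simp
    have e2 : (∑ j ∈ Finset.range (p+2),
          ((-1:ℤ)^j * (((s+j).choose j) * ((j:ℤ) * p.descFactorial (j-1)))) • (a^(p+1-j) * b^(s+1+j)))
        = - ∑ j ∈ Finset.range (p+1),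
            ((-1:ℤ)^j * (((s+j).choose j) * p.descFactorial j) * (s+1+j)) •
              (a^(p-j) * b^(s+1+j+1)) := by
      rw [Finset.sum_range_succ']
      simp only [Nat.cast_zero, zero_mul, mul_zero, zero_smul, add_zero]
      rw [← Finset.sum_neg_distrib]
      refine Finset.sum_congr rfl fun k hk => ?_
      rw [← neg_smul]
      have hcz : (((s+k+1).choose (k+1) : ℤ)) * (((k:ℤ)+1) * p.descFactorial k)
          = ((s:ℤ)+1+k) * (((s+k).choose k : ℤ) * p.descFactorial k) := by
        exact_mod_cast choose_desc_rec s k p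
      congr 1
      · simp only [Nat.add_sub_cancel, show s + (k+1) = s + k + 1 from rfl]
        push_cast at hcz ⊢
        linear_combination ((-1:ℤ)^(k+1)) * hcz
      · have h1 : p + 1 - (k + 1) = p - k := by omega
        rw [h1, show s + 1 + (k+1) = s + 1 + k + 1 from rfl]
    rw [Finset.sum_congr rfl hsplit, Finset.sum_add_distrib, e1, e2, ← sub_eq_add_neg]
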